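/- arXiv:2604.05227 — 2 statements merged into one kernel-verified Lean document; each statement's English description precedes it below -/
import Mathlib

section
/- Let S be a set of size n, f a function on unordered pairs, and 2 ≤ k ≤ n. For the uniform subset estimator f̂ = (n(n-1))/(k(k-1)) · f(S_k) with S_k uniform over k-subsets, the variance equals Var[f̂] = (n(n-1)(n-k))/(2k(k-1)) · [ 2(E3 − E4)·k·n + (E2 − 4·E3 + 3·E4)·(n + k − 1) ], where E2 = E_{{u,v}}[f(u,v)²] over uniform unordered pairs, E3 = E[f(u,v)f(v,w)] over uniform ordered triples of distinct vertices, and E4 = E[f(u,v)f(w,z)] over uniform ordered quadruples of distinct vertices. -/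
set_option linter.unusedSectionVars false


open Finset

/-- Sum of a symmetric pair function `f` over all unordered pairs of distinct
elements of `T`. -/
noncomputable def pairSum {V : Type*} [DecidableEq V] (f : V → V → ℝ) (T : Finset V) : ℝ :=
  (∑ p ∈ T.offDiag, f p.1 p.2) / 2

/-- Sum of `f(u,v)·f(v,w)` over ordered triples of distinct vertices of `T`. -/
noncomputable def tripleSum {V : Type*} [DecidableEq V] (f : V → V → ℝ) (T : Finset V) : ℝ :=
  ∑ u ∈ T, ∑ v ∈ T \ {u}, ∑ w ∈ (T \ {u}) \ {v}, f u v * f v w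

/-- Sum of `f(u,v)·f(w,z)` over ordered quadruples of distinct vertices of `T`. -/
noncomputable def quadSum {V : Type*} [DecidableEq V] (f : V → V → ℝ) (T : Finset V) : ℝ :=
  ∑ u ∈ T, ∑ v ∈ T \ {u}, ∑ w ∈ (T \ {u}) \ {v}, ∑ z ∈ ((T \ {u}) \ {v}) \ {w},
    f u v * f w z

/-- `E2`: average of `f(u,v)^2` over the `C(n,2)` unordered pairs of distinct elements. -/
noncomputable def E2 {V : Type*} [DecidableEq V] (f : V → V → ℝ) (S : Finset V) (n : ℕ) : ℝ :=
  (∑ p ∈ S.offDiag, (f p.1 p.2) ^ 2) / ((n : ℝ) * ((n : ℝ) - 1))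

/-- `E3`: average of `f(u,v)·f(v,w)` over the `n(n-1)(n-2)` ordered triples of distinct
vertices. -/
noncomputable def E3 {V : Type*} [DecidableEq V] (f : V → V → ℝ) (S : Finset V) (n : ℕ) : ℝ :=
  tripleSum f S / ((n : ℝ) * ((n : ℝ) - 1) * ((n : ℝ) - 2))

/-- `E4`: average of `f(u,v)·f(w,z)` over the `n(n-1)(n-2)(n-3)` ordered quadruples of
distinct vertices. -/
noncomputable def E4 {V : Type*} [DecidableEq V] (f : V → V → ℝ) (S : Finset V) (n : ℕ) : ℝ :=
  quadSum f S / ((n : ℝ) * ((n : ℝ) - 1) * ((n : ℝ) - 2) * ((n : ℝ) - 3))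

/-- The subset Monte Carlo estimator `(n(n-1))/(k(k-1)) · f(S_k)`. -/
noncomputable def mcEst {V : Type*} [DecidableEq V] (f : V → V → ℝ) (n k : ℕ)
    (T : Finset V) : ℝ :=
  ((n : ℝ) * ((n : ℝ) - 1)) / ((k : ℝ) * ((k : ℝ) - 1)) * pairSum f T

/-- Variance of the subset Monte Carlo estimator under the uniform distribution over
`k`-subsets of `S`. -/
noncomputable def mcVar {V : Type*} [DecidableEq V] (f : V → V → ℝ) (S : Finset V)
    (n k : ℕ) : ℝ :=
  (∑ T ∈ S.powersetCard k, (mcEst f n k T) ^ 2) / (n.choose k : ℝ)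
    - ((∑ T ∈ S.powersetCard k, mcEst f n k T) / (n.choose k : ℝ)) ^ 2


section Aux
variable {V : Type*} [DecidableEq V]

noncomputable def S2s (T : Finset V) (g : V → V → ℝ) : ℝ :=
  ∑ u ∈ T, ∑ v ∈ T, if u ≠ v then g u v else 0
noncomputable def S3s (T : Finset V) (g : V → V → V → ℝ) : ℝ :=
  ∑ u ∈ T, ∑ v ∈ T, ∑ w ∈ T, if u ≠ v ∧ u ≠ w ∧ v ≠ w then g u v w else 0
noncomputable def S4s (T : Finset V) (g : V → V → V → V → ℝ) : ℝ :=
  ∑ u ∈ T, ∑ v ∈ T, ∑ w ∈ T, ∑ z ∈ T,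
    if u ≠ v ∧ u ≠ w ∧ u ≠ z ∧ v ≠ w ∧ v ≠ z ∧ w ≠ z then g u v w z else 0




/-- number of `k`-subsets of `S` containing a fixed subset `U`. -/
lemma card_powersetCard_filter_subset (S U : Finset V) (hU : U ⊆ S) (k : ℕ) (hk : U.card ≤ k) :
    ((S.powersetCard k).filter (fun T => U ⊆ T)).card
      = (S.card - U.card).choose (k - U.card) := by
  rw [← card_sdiff_of_subset hU, ← card_powersetCard]
  apply Finset.card_bij (fun T _ => T \ U)
  · intro T hT
    simp only [mem_filter, mem_powersetCard] at hT ⊢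
    obtain ⟨⟨hTS, hTk⟩, hUT⟩ := hT
    exact ⟨sdiff_subset_sdiff hTS le_rfl, by rw [card_sdiff_of_subset hUT, hTk]⟩
  · intro T1 hT1 T2 hT2 h
    simp only [mem_filter, mem_powersetCard] at hT1 hT2
    have e1 : T1 = T1 \ U ∪ U := by rw [sdiff_union_of_subset hT1.2]
    have e2 : T2 = T2 \ U ∪ U := by rw [sdiff_union_of_subset hT2.2]
    rw [e1, e2, h]
  · intro R hR
    simp only [mem_powersetCard] at hR
    refine ⟨R ∪ U, ?_, ?_⟩
    · simp only [mem_filter, mem_powersetCard]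
      have hdisj : Disjoint R U := disjoint_of_subset_left hR.1 sdiff_disjoint
      refine ⟨⟨union_subset (hR.1.trans (sdiff_subset)) hU, ?_⟩, subset_union_right⟩
      rw [card_union_of_disjoint hdisj, hR.2]
      omega
    · have hdisj : Disjoint R U := disjoint_of_subset_left hR.1 sdiff_disjoint
      rw [union_sdiff_right, sdiff_eq_self_of_disjoint hdisj]

lemma card_powersetCard_filter_subset_zero (S U : Finset V) (k : ℕ) (hk : k < U.card) :
    ((S.powersetCard k).filter (fun T => U ⊆ T)).card = 0 := by
  rw [card_eq_zero, filter_eq_empty_iff]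
  intro T hT
  simp only [mem_powersetCard] at hT
  intro hUT
  have := card_le_card hUT
  omega

lemma sum_sdiff1 (T : Finset V) (a : V) (h : V → ℝ) :
    ∑ x ∈ T \ {a}, h x = ∑ x ∈ T, if x ≠ a then h x else 0 := by
  rw [show T \ {a} = T.filter (fun x => x ≠ a) by ext x; simp, Finset.sum_filter]

lemma sum_sdiff2 (T : Finset V) (a b : V) (h : V → ℝ) :
    ∑ x ∈ (T \ {a}) \ {b}, h x = ∑ x ∈ T, if x ≠ a ∧ x ≠ b then h x else 0 := by
  rw [show (T \ {a}) \ {b} = T.filter (fun x => x ≠ a ∧ x ≠ b) by ext x; simp; tauto,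
    Finset.sum_filter]

lemma sum_sdiff3 (T : Finset V) (a b c : V) (h : V → ℝ) :
    ∑ x ∈ ((T \ {a}) \ {b}) \ {c}, h x = ∑ x ∈ T, if x ≠ a ∧ x ≠ b ∧ x ≠ c then h x else 0 := by
  rw [show ((T \ {a}) \ {b}) \ {c} = T.filter (fun x => x ≠ a ∧ x ≠ b ∧ x ≠ c) by
    ext x; simp; tauto, Finset.sum_filter]

lemma offDiag_sum (T : Finset V) (g : V → V → ℝ) :
    ∑ p ∈ T.offDiag, g p.1 p.2 = S2s T g := by
  rw [show T.offDiag = (T ×ˢ T).filter (fun a : V × V => a.1 ≠ a.2) by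
    ext x; simp only [mem_offDiag, mem_filter, mem_product, and_assoc],
    Finset.sum_filter, Finset.sum_product]
  rfl

lemma tripleSum_eq (f : V → V → ℝ) (T : Finset V) :
    tripleSum f T = S3s T (fun u v w => f u v * f v w) := by
  unfold tripleSum S3s
  refine Finset.sum_congr rfl fun u _ => ?_
  rw [sum_sdiff1]
  refine Finset.sum_congr rfl fun v _ => ?_
  by_cases hv : v = u
  · simp [hv]
  · rw [if_pos hv, sum_sdiff2]
    refine Finset.sum_congr rfl fun w _ => ?_
    exact if_congr (by tauto) rfl rfl

lemma quadSum_eq (f : V → V → ℝ) (T : Finset V) :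
    quadSum f T = S4s T (fun u v w z => f u v * f w z) := by
  unfold quadSum S4s
  refine Finset.sum_congr rfl fun u _ => ?_
  rw [sum_sdiff1]
  refine Finset.sum_congr rfl fun v _ => ?_
  by_cases hv : v = u
  · simp [hv]
  · rw [if_pos hv, sum_sdiff2]
    refine Finset.sum_congr rfl fun w _ => ?_
    by_cases hw : w ≠ u ∧ w ≠ v
    · rw [if_pos hw, sum_sdiff3]
      refine Finset.sum_congr rfl fun z _ => ?_
      exact if_congr (by tauto) rfl rfl
    · rw [if_neg hw]
      symm
      apply Finset.sum_eq_zero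
      intro z _
      rw [if_neg (by tauto)]

lemma S3s_swap12 (T : Finset V) (g : V → V → V → ℝ) :
    S3s T g = S3s T (fun u v w => g v u w) := by
  unfold S3s
  rw [Finset.sum_comm]
  refine Finset.sum_congr rfl fun v _ => Finset.sum_congr rfl fun u _ =>
    Finset.sum_congr rfl fun w _ => ?_
  exact if_congr (by tauto) rfl rfl

lemma S3s_congr (T : Finset V) (g g' : V → V → V → ℝ)
    (h : ∀ u v w, u ≠ v → u ≠ w → v ≠ w → g u v w = g' u v w) :
    S3s T g = S3s T g' := by
  unfold S3s
  refine Finset.sum_congr rfl fun u _ => Finset.sum_congr rfl fun v _ =>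
    Finset.sum_congr rfl fun w _ => ?_
  by_cases hc : u ≠ v ∧ u ≠ w ∧ v ≠ w
  · rw [if_pos hc, if_pos hc, h _ _ _ hc.1 hc.2.1 hc.2.2]
  · rw [if_neg hc, if_neg hc]

lemma S4s_congr (T : Finset V) (g g' : V → V → V → V → ℝ)
    (h : ∀ u v w z, u ≠ v → u ≠ w → u ≠ z → v ≠ w → v ≠ z → w ≠ z → g u v w z = g' u v w z) :
    S4s T g = S4s T g' := by
  unfold S4s
  refine Finset.sum_congr rfl fun u _ => Finset.sum_congr rfl fun v _ =>
    Finset.sum_congr rfl fun w _ => Finset.sum_congr rfl fun z _ => ?_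
  by_cases hc : u ≠ v ∧ u ≠ w ∧ u ≠ z ∧ v ≠ w ∧ v ≠ z ∧ w ≠ z
  · rw [if_pos hc, if_pos hc, h _ _ _ _ hc.1 hc.2.1 hc.2.2.1 hc.2.2.2.1 hc.2.2.2.2.1 hc.2.2.2.2.2]
  · rw [if_neg hc, if_neg hc]

lemma S2s_congr (T : Finset V) (g g' : V → V → ℝ)
    (h : ∀ u v, u ≠ v → g u v = g' u v) : S2s T g = S2s T g' := by
  unfold S2s
  refine Finset.sum_congr rfl fun u _ => Finset.sum_congr rfl fun v _ => ?_
  by_cases hc : u ≠ v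
  · rw [if_pos hc, if_pos hc, h _ _ hc]
  · rw [if_neg hc, if_neg hc]

lemma ind_split (u v w z : V) (a b : ℝ) :
    (if u ≠ v then a else 0) * (if w ≠ z then b else 0)
      = (if z = v ∧ (w = u ∧ u ≠ v) then a * b else 0)
      + (if z = u ∧ (w = v ∧ u ≠ v) then a * b else 0)
      + (if w = u ∧ (u ≠ v ∧ z ≠ u ∧ z ≠ v) then a * b else 0)
      + (if w = v ∧ (u ≠ v ∧ z ≠ u ∧ z ≠ v) then a * b else 0)
      + (if z = u ∧ (u ≠ v ∧ w ≠ u ∧ w ≠ v) then a * b else 0)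
      + (if z = v ∧ (u ≠ v ∧ w ≠ u ∧ w ≠ v) then a * b else 0)
      + (if u ≠ v ∧ u ≠ w ∧ u ≠ z ∧ v ≠ w ∧ v ≠ z ∧ w ≠ z then a * b else 0) := by
  by_cases h1 : u = v <;> by_cases h2 : w = z <;> by_cases h3 : w = u <;>
    by_cases h4 : w = v <;> by_cases h5 : z = u <;> by_cases h6 : z = v <;>
    simp_all [eq_comm]

lemma sum_pin (T : Finset V) {a : V} (ha : a ∈ T) (P : Prop) [Decidable P] (h : V → ℝ) :
    (∑ x ∈ T, if x = a ∧ P then h x else 0) = if P then h a else 0 := by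
  simp only [ite_and]
  rw [Finset.sum_ite_eq' T a, if_pos ha]

lemma sq_sum (T : Finset V) (e : V → V → ℝ) :
    (∑ u ∈ T, ∑ v ∈ T, e u v) ^ 2
      = ∑ u ∈ T, ∑ v ∈ T, ∑ w ∈ T, ∑ z ∈ T, e u v * e w z := by
  rw [sq, Finset.sum_mul_sum]
  refine Finset.sum_congr rfl fun u _ => ?_
  calc ∑ w ∈ T, (∑ v ∈ T, e u v) * ∑ z ∈ T, e w z
      = ∑ w ∈ T, ∑ v ∈ T, ∑ z ∈ T, e u v * e w z :=
        Finset.sum_congr rfl fun w _ => Finset.sum_mul_sum T T _ _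
    _ = _ := Finset.sum_comm

lemma S3s_of_cond (T : Finset V) (g : V → V → V → ℝ) :
    (∑ u ∈ T, ∑ v ∈ T, ∑ w ∈ T, if u ≠ v ∧ w ≠ u ∧ w ≠ v then g u v w else 0) = S3s T g := by
  refine Finset.sum_congr rfl fun u _ => Finset.sum_congr rfl fun v _ =>
    Finset.sum_congr rfl fun w _ => if_congr (by tauto) rfl rfl

lemma sq_expand (T : Finset V) (f : V → V → ℝ) (hsym : ∀ u v, f u v = f v u) :
    (S2s T f) ^ 2 = 2 * S2s T (fun u v => f u v * f u v)
      + 4 * S3s T (fun u v w => f u v * f v w)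
      + S4s T (fun u v w z => f u v * f w z) := by
  rw [S2s, sq_sum]
  simp only [ind_split, Finset.sum_add_distrib]
  have hM1 : (∑ u ∈ T, ∑ v ∈ T, ∑ w ∈ T, ∑ z ∈ T,
      if z = v ∧ (w = u ∧ u ≠ v) then f u v * f w z else 0)
      = S2s T (fun u v => f u v * f u v) := by
    refine Finset.sum_congr rfl fun u hu => Finset.sum_congr rfl fun v hv => ?_
    calc ∑ w ∈ T, ∑ z ∈ T, (if z = v ∧ (w = u ∧ u ≠ v) then f u v * f w z else 0)
        = ∑ w ∈ T, if w = u ∧ u ≠ v then f u v * f w v else 0 :=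
          Finset.sum_congr rfl fun w _ => sum_pin T hv _ _
      _ = if u ≠ v then f u v * f u v else 0 := sum_pin T hu _ _
  have hM2 : (∑ u ∈ T, ∑ v ∈ T, ∑ w ∈ T, ∑ z ∈ T,
      if z = u ∧ (w = v ∧ u ≠ v) then f u v * f w z else 0)
      = S2s T (fun u v => f u v * f v u) := by
    refine Finset.sum_congr rfl fun u hu => Finset.sum_congr rfl fun v hv => ?_
    calc ∑ w ∈ T, ∑ z ∈ T, (if z = u ∧ (w = v ∧ u ≠ v) then f u v * f w z else 0)
        = ∑ w ∈ T, if w = v ∧ u ≠ v then f u v * f w u else 0 :=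
          Finset.sum_congr rfl fun w _ => sum_pin T hu _ _
      _ = if u ≠ v then f u v * f v u else 0 := sum_pin T hv _ _
  have hM3 : (∑ u ∈ T, ∑ v ∈ T, ∑ w ∈ T, ∑ z ∈ T,
      if w = u ∧ (u ≠ v ∧ z ≠ u ∧ z ≠ v) then f u v * f w z else 0)
      = S3s T (fun u v w => f u v * f u w) := by
    rw [← S3s_of_cond]
    refine Finset.sum_congr rfl fun u hu => Finset.sum_congr rfl fun v hv => ?_
    rw [Finset.sum_comm]
    refine Finset.sum_congr rfl fun z hz => ?_
    exact (sum_pin T hu _ _).trans (if_congr (by tauto) rfl rfl)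
  have hM4 : (∑ u ∈ T, ∑ v ∈ T, ∑ w ∈ T, ∑ z ∈ T,
      if w = v ∧ (u ≠ v ∧ z ≠ u ∧ z ≠ v) then f u v * f w z else 0)
      = S3s T (fun u v w => f u v * f v w) := by
    rw [← S3s_of_cond]
    refine Finset.sum_congr rfl fun u hu => Finset.sum_congr rfl fun v hv => ?_
    rw [Finset.sum_comm]
    refine Finset.sum_congr rfl fun z hz => ?_
    exact (sum_pin T hv _ _).trans (if_congr (by tauto) rfl rfl)
  have hM5 : (∑ u ∈ T, ∑ v ∈ T, ∑ w ∈ T, ∑ z ∈ T,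
      if z = u ∧ (u ≠ v ∧ w ≠ u ∧ w ≠ v) then f u v * f w z else 0)
      = S3s T (fun u v w => f u v * f w u) := by
    rw [← S3s_of_cond]
    refine Finset.sum_congr rfl fun u hu => Finset.sum_congr rfl fun v hv =>
      Finset.sum_congr rfl fun w hw => ?_
    exact sum_pin T hu _ _
  have hM6 : (∑ u ∈ T, ∑ v ∈ T, ∑ w ∈ T, ∑ z ∈ T,
      if z = v ∧ (u ≠ v ∧ w ≠ u ∧ w ≠ v) then f u v * f w z else 0)
      = S3s T (fun u v w => f u v * f w v) := by
    rw [← S3s_of_cond]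
    refine Finset.sum_congr rfl fun u hu => Finset.sum_congr rfl fun v hv =>
      Finset.sum_congr rfl fun w hw => ?_
    exact sum_pin T hv _ _
  rw [hM1, hM2, hM3, hM4, hM5, hM6]
  have e2 : S2s T (fun u v => f u v * f v u) = S2s T (fun u v => f u v * f u v) :=
    S2s_congr _ _ _ fun u v _ => by rw [hsym v u]
  have e3 : S3s T (fun u v w => f u v * f u w) = S3s T (fun u v w => f u v * f v w) := by
    rw [S3s_swap12]
    exact S3s_congr _ _ _ fun u v w _ _ _ => by rw [hsym v u]
  have e5 : S3s T (fun u v w => f u v * f w u) = S3s T (fun u v w => f u v * f v w) := by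
    rw [show (fun u v w => f u v * f w u) = (fun u v w => f u v * f u w) from
      funext fun u => funext fun v => funext fun w => by rw [hsym w u], e3]
  have e6 : S3s T (fun u v w => f u v * f w v) = S3s T (fun u v w => f u v * f v w) :=
    S3s_congr _ _ _ fun u v w _ _ _ => by rw [hsym w v]
  rw [e2, e3, e5, e6]
  show _ + _ + _ + _ + _ + _ + S4s T _ = _
  ring

noncomputable def indR (T : Finset V) (u : V) : ℝ := if u ∈ T then 1 else 0

lemma sum_ind (S T : Finset V) (hTS : T ⊆ S) (h : V → ℝ) :
    ∑ x ∈ T, h x = ∑ x ∈ S, indR T x * h x := by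
  have h1 : ∑ x ∈ T, h x = ∑ x ∈ T, indR T x * h x :=
    Finset.sum_congr rfl fun x hx => by simp [indR, hx]
  rw [h1]
  exact Finset.sum_subset hTS (fun x _ hxT => by simp [indR, hxT])

/-- the count of `k`-subsets containing given distinct elements, as a real sum. -/
lemma count2 (S : Finset V) (k : ℕ) (hk : 2 ≤ k) {u v : V} (hu : u ∈ S) (hv : v ∈ S)
    (huv : u ≠ v) :
    ∑ T ∈ S.powersetCard k, indR T u * indR T v = ((S.card - 2).choose (k - 2) : ℝ) := by
  have : ∀ T : Finset V, indR T u * indR T v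
      = if ({u, v} : Finset V) ⊆ T then (1 : ℝ) else 0 := by
    intro T
    by_cases h1 : u ∈ T <;> by_cases h2 : v ∈ T <;>
      simp [indR, h1, h2, insert_subset_iff]
  simp only [this]
  rw [Finset.sum_boole]
  rw [card_powersetCard_filter_subset S {u, v} (by simp [insert_subset_iff, hu, hv]) k
    (by rw [card_insert_of_notMem (by simp [huv]), card_singleton]; exact hk),
    card_insert_of_notMem (by simp [huv]), card_singleton]

lemma count3 (S : Finset V) (k : ℕ) {u v w : V} (hu : u ∈ S) (hv : v ∈ S) (hw : w ∈ S)
    (huv : u ≠ v) (huw : u ≠ w) (hvw : v ≠ w) :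
    ∑ T ∈ S.powersetCard k, indR T u * indR T v * indR T w
      = ((if 3 ≤ k then (S.card - 3).choose (k - 3) else 0 : ℕ) : ℝ) := by
  have : ∀ T : Finset V, indR T u * indR T v * indR T w
      = if ({u, v, w} : Finset V) ⊆ T then (1 : ℝ) else 0 := by
    intro T
    by_cases h1 : u ∈ T <;> by_cases h2 : v ∈ T <;> by_cases h3 : w ∈ T <;>
      simp [indR, h1, h2, h3, insert_subset_iff]
  simp only [this]
  rw [Finset.sum_boole]
  have hcard : ({u, v, w} : Finset V).card = 3 := by
    rw [card_insert_of_notMem (by simp [huv, huw]),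
      card_insert_of_notMem (by simp [hvw]), card_singleton]
  by_cases h3k : 3 ≤ k
  · rw [if_pos h3k,
      card_powersetCard_filter_subset S {u, v, w} (by simp [insert_subset_iff, hu, hv, hw]) k
        (by rw [hcard]; exact h3k), hcard]
  · rw [if_neg h3k, card_powersetCard_filter_subset_zero S {u, v, w} k (by omega)]

lemma count4 (S : Finset V) (k : ℕ) {u v w z : V} (hu : u ∈ S) (hv : v ∈ S) (hw : w ∈ S)
    (hz : z ∈ S) (huv : u ≠ v) (huw : u ≠ w) (huz : u ≠ z) (hvw : v ≠ w) (hvz : v ≠ z)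
    (hwz : w ≠ z) :
    ∑ T ∈ S.powersetCard k, indR T u * indR T v * indR T w * indR T z
      = ((if 4 ≤ k then (S.card - 4).choose (k - 4) else 0 : ℕ) : ℝ) := by
  have : ∀ T : Finset V, indR T u * indR T v * indR T w * indR T z
      = if ({u, v, w, z} : Finset V) ⊆ T then (1 : ℝ) else 0 := by
    intro T
    by_cases h1 : u ∈ T <;> by_cases h2 : v ∈ T <;> by_cases h3 : w ∈ T <;>
      by_cases h4 : z ∈ T <;> simp [indR, h1, h2, h3, h4, insert_subset_iff]
  simp only [this]
  rw [Finset.sum_boole]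
  have hcard : ({u, v, w, z} : Finset V).card = 4 := by
    rw [card_insert_of_notMem (by simp [huv, huw, huz]),
      card_insert_of_notMem (by simp [hvw, hvz]),
      card_insert_of_notMem (by simp [hwz]), card_singleton]
  by_cases h4k : 4 ≤ k
  · rw [if_pos h4k,
      card_powersetCard_filter_subset S {u, v, w, z}
        (by simp [insert_subset_iff, hu, hv, hw, hz]) k (by rw [hcard]; exact h4k), hcard]
  · rw [if_neg h4k, card_powersetCard_filter_subset_zero S {u, v, w, z} k (by omega)]

lemma swap2 (S : Finset V) (k : ℕ) (hk : 2 ≤ k) (g : V → V → ℝ) :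
    ∑ T ∈ S.powersetCard k, S2s T g = ((S.card - 2).choose (k - 2) : ℝ) * S2s S g := by
  have hrw : ∀ T ∈ S.powersetCard k, S2s T g
      = ∑ u ∈ S, ∑ v ∈ S, indR T u * indR T v * (if u ≠ v then g u v else 0) := by
    intro T hT
    have hTS : T ⊆ S := (mem_powersetCard.1 hT).1
    rw [S2s, sum_ind S T hTS]
    refine Finset.sum_congr rfl fun u hu => ?_
    rw [sum_ind S T hTS, Finset.mul_sum]
    exact Finset.sum_congr rfl fun v _ => by ring
  rw [Finset.sum_congr rfl hrw, Finset.sum_comm, S2s, Finset.mul_sum]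
  refine Finset.sum_congr rfl fun u hu => ?_
  rw [Finset.sum_comm, Finset.mul_sum]
  refine Finset.sum_congr rfl fun v hv => ?_
  by_cases huv : u ≠ v
  · rw [← Finset.sum_mul, count2 S k hk hu hv huv]
  · simp only [if_neg huv, mul_zero, Finset.sum_const_zero]

lemma swap3 (S : Finset V) (k : ℕ) (g : V → V → V → ℝ) :
    ∑ T ∈ S.powersetCard k, S3s T g
      = ((if 3 ≤ k then (S.card - 3).choose (k - 3) else 0 : ℕ) : ℝ) * S3s S g := by
  have hrw : ∀ T ∈ S.powersetCard k, S3s T g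
      = ∑ u ∈ S, ∑ v ∈ S, ∑ w ∈ S, indR T u * indR T v * indR T w
          * (if u ≠ v ∧ u ≠ w ∧ v ≠ w then g u v w else 0) := by
    intro T hT
    have hTS : T ⊆ S := (mem_powersetCard.1 hT).1
    rw [S3s, sum_ind S T hTS]
    refine Finset.sum_congr rfl fun u hu => ?_
    rw [sum_ind S T hTS, Finset.mul_sum]
    refine Finset.sum_congr rfl fun v hv => ?_
    rw [sum_ind S T hTS, Finset.mul_sum, Finset.mul_sum]
    exact Finset.sum_congr rfl fun w _ => by ring
  rw [Finset.sum_congr rfl hrw, Finset.sum_comm, S3s, Finset.mul_sum]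
  refine Finset.sum_congr rfl fun u hu => ?_
  rw [Finset.sum_comm, Finset.mul_sum]
  refine Finset.sum_congr rfl fun v hv => ?_
  rw [Finset.sum_comm, Finset.mul_sum]
  refine Finset.sum_congr rfl fun w hw => ?_
  by_cases hc : u ≠ v ∧ u ≠ w ∧ v ≠ w
  · rw [← Finset.sum_mul, count3 S k hu hv hw hc.1 hc.2.1 hc.2.2]
  · simp only [if_neg hc, mul_zero, Finset.sum_const_zero]

lemma swap4 (S : Finset V) (k : ℕ) (g : V → V → V → V → ℝ) :
    ∑ T ∈ S.powersetCard k, S4s T g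
      = ((if 4 ≤ k then (S.card - 4).choose (k - 4) else 0 : ℕ) : ℝ) * S4s S g := by
  have hrw : ∀ T ∈ S.powersetCard k, S4s T g
      = ∑ u ∈ S, ∑ v ∈ S, ∑ w ∈ S, ∑ z ∈ S, indR T u * indR T v * indR T w * indR T z
          * (if u ≠ v ∧ u ≠ w ∧ u ≠ z ∧ v ≠ w ∧ v ≠ z ∧ w ≠ z then g u v w z else 0) := by
    intro T hT
    have hTS : T ⊆ S := (mem_powersetCard.1 hT).1
    rw [S4s, sum_ind S T hTS]
    refine Finset.sum_congr rfl fun u hu => ?_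
    rw [sum_ind S T hTS, Finset.mul_sum]
    refine Finset.sum_congr rfl fun v hv => ?_
    rw [sum_ind S T hTS, Finset.mul_sum, Finset.mul_sum]
    refine Finset.sum_congr rfl fun w hw => ?_
    rw [sum_ind S T hTS, Finset.mul_sum, Finset.mul_sum, Finset.mul_sum]
    exact Finset.sum_congr rfl fun z _ => by ring
  rw [Finset.sum_congr rfl hrw, Finset.sum_comm, S4s, Finset.mul_sum]
  refine Finset.sum_congr rfl fun u hu => ?_
  rw [Finset.sum_comm, Finset.mul_sum]
  refine Finset.sum_congr rfl fun v hv => ?_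
  rw [Finset.sum_comm, Finset.mul_sum]
  refine Finset.sum_congr rfl fun w hw => ?_
  rw [Finset.sum_comm, Finset.mul_sum]
  refine Finset.sum_congr rfl fun z hz => ?_
  by_cases hc : u ≠ v ∧ u ≠ w ∧ u ≠ z ∧ v ≠ w ∧ v ≠ z ∧ w ≠ z
  · rw [← Finset.sum_mul,
      count4 S k hu hv hw hz hc.1 hc.2.1 hc.2.2.1 hc.2.2.2.1 hc.2.2.2.2.1 hc.2.2.2.2.2]
  · simp only [if_neg hc, mul_zero, Finset.sum_const_zero]

end Aux


lemma cast_choose2 (a : ℕ) (h : 2 ≤ a) :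
    ((a.choose 2 : ℕ) : ℝ) * 2 = (a : ℝ) * ((a : ℝ) - 1) := by
  have hd := Nat.descFactorial_eq_factorial_mul_choose a 2
  have : ((a.descFactorial 2 : ℕ) : ℝ) = (a : ℝ) * ((a : ℝ) - 1) := by
    simp only [Nat.descFactorial_succ, Nat.descFactorial_zero, mul_one, Nat.sub_zero]
    push_cast [Nat.cast_sub (show 1 ≤ a by omega)]
    ring
  have h2 : ((a.descFactorial 2 : ℕ) : ℝ) = 2 * ((a.choose 2 : ℕ) : ℝ) := by
    rw [hd]; norm_num [Nat.factorial]
  linarith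
lemma cast_choose3 (a : ℕ) (h : 3 ≤ a) :
    ((a.choose 3 : ℕ) : ℝ) * 6 = (a : ℝ) * ((a : ℝ) - 1) * ((a : ℝ) - 2) := by
  have hd := Nat.descFactorial_eq_factorial_mul_choose a 3
  have : ((a.descFactorial 3 : ℕ) : ℝ) = (a : ℝ) * ((a : ℝ) - 1) * ((a : ℝ) - 2) := by
    simp only [Nat.descFactorial_succ, Nat.descFactorial_zero, mul_one, Nat.sub_zero]
    push_cast [Nat.cast_sub (show 1 ≤ a by omega), Nat.cast_sub (show 2 ≤ a by omega)]
    ring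
  have h2 : ((a.descFactorial 3 : ℕ) : ℝ) = 6 * ((a.choose 3 : ℕ) : ℝ) := by
    rw [hd]; norm_num [Nat.factorial]
  linarith
lemma cast_choose4 (a : ℕ) (h : 4 ≤ a) :
    ((a.choose 4 : ℕ) : ℝ) * 24 = (a : ℝ) * ((a : ℝ) - 1) * ((a : ℝ) - 2) * ((a : ℝ) - 3) := by
  have hd := Nat.descFactorial_eq_factorial_mul_choose a 4
  have : ((a.descFactorial 4 : ℕ) : ℝ)
      = (a : ℝ) * ((a : ℝ) - 1) * ((a : ℝ) - 2) * ((a : ℝ) - 3) := by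
    simp only [Nat.descFactorial_succ, Nat.descFactorial_zero, mul_one, Nat.sub_zero]
    push_cast [Nat.cast_sub (show 1 ≤ a by omega), Nat.cast_sub (show 2 ≤ a by omega),
      Nat.cast_sub (show 3 ≤ a by omega)]
    ring
  have h2 : ((a.descFactorial 4 : ℕ) : ℝ) = 24 * ((a.choose 4 : ℕ) : ℝ) := by
    rw [hd]; norm_num [Nat.factorial]
  linarith

lemma ratio2 (n k : ℕ) (hn : 4 ≤ n) (hk : 2 ≤ k) (hkn : k ≤ n) :
    (((n - 2).choose (k - 2) : ℕ) : ℝ) * ((n : ℝ) * ((n : ℝ) - 1))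
      = ((n.choose k : ℕ) : ℝ) * ((k : ℝ) * ((k : ℝ) - 1)) := by
  have h := Nat.choose_mul (n := n) hk
  have hc : ((n.choose k : ℕ) : ℝ) * ((k.choose 2 : ℕ) : ℝ)
      = ((n.choose 2 : ℕ) : ℝ) * (((n - 2).choose (k - 2) : ℕ) : ℝ) := by
    exact_mod_cast congrArg (fun x : ℕ => (x : ℝ)) h
  have hdn := cast_choose2 n (by omega)
  have hdk := cast_choose2 k hk
  nlinarith [hc, hdn, hdk]
lemma ratio3 (n k : ℕ) (hn : 4 ≤ n) (hk : 2 ≤ k) (hkn : k ≤ n) :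
    (((if 3 ≤ k then (n - 3).choose (k - 3) else 0 : ℕ)) : ℝ)
        * ((n : ℝ) * ((n : ℝ) - 1) * ((n : ℝ) - 2))
      = ((n.choose k : ℕ) : ℝ) * ((k : ℝ) * ((k : ℝ) - 1) * ((k : ℝ) - 2)) := by
  by_cases h3 : 3 ≤ k
  · rw [if_pos h3]
    have h := Nat.choose_mul (n := n) h3
    have hc : ((n.choose k : ℕ) : ℝ) * ((k.choose 3 : ℕ) : ℝ)
        = ((n.choose 3 : ℕ) : ℝ) * (((n - 3).choose (k - 3) : ℕ) : ℝ) := by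
      exact_mod_cast congrArg (fun x : ℕ => (x : ℝ)) h
    have hdn := cast_choose3 n (by omega)
    have hdk := cast_choose3 k h3
    nlinarith [hc, hdn, hdk]
  · rw [if_neg h3]
    have hk2 : k = 2 := by omega
    subst hk2
    norm_num
lemma ratio4 (n k : ℕ) (hn : 4 ≤ n) (hk : 2 ≤ k) (hkn : k ≤ n) :
    (((if 4 ≤ k then (n - 4).choose (k - 4) else 0 : ℕ)) : ℝ)
        * ((n : ℝ) * ((n : ℝ) - 1) * ((n : ℝ) - 2) * ((n : ℝ) - 3))
      = ((n.choose k : ℕ) : ℝ) * ((k : ℝ) * ((k : ℝ) - 1) * ((k : ℝ) - 2) * ((k : ℝ) - 3)) := by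
  by_cases h4 : 4 ≤ k
  · rw [if_pos h4]
    have h := Nat.choose_mul (n := n) h4
    have hc : ((n.choose k : ℕ) : ℝ) * ((k.choose 4 : ℕ) : ℝ)
        = ((n.choose 4 : ℕ) : ℝ) * (((n - 4).choose (k - 4) : ℕ) : ℝ) := by
      exact_mod_cast congrArg (fun x : ℕ => (x : ℝ)) h
    have hdn := cast_choose4 n (by omega)
    have hdk := cast_choose4 k h4
    nlinarith [hc, hdn, hdk]
  · rw [if_neg h4]
    have hk2 : k = 2 ∨ k = 3 := by omega
    rcases hk2 with h | h <;> subst h <;> norm_num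

set_option maxHeartbeats 3200000 in
/-- Exact variance of the uniform subset estimator:
`Var[f̂] = (n(n-1)(n-k))/(2k(k-1)) · [2(E3−E4)kn + (E2−4E3+3E4)(n+k−1)]`. -/
theorem mc_variance_formula {V : Type*} [DecidableEq V] (S : Finset V) (n k : ℕ)
    (hn : S.card = n) (hn4 : 4 ≤ n) (hk2 : 2 ≤ k) (hkn : k ≤ n)
    (f : V → V → ℝ) (hsym : ∀ u v, f u v = f v u) :
    mcVar f S n k
      = ((n : ℝ) * ((n : ℝ) - 1) * ((n : ℝ) - (k : ℝ))) / (2 * (k : ℝ) * ((k : ℝ) - 1))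
          * (2 * (E3 f S n - E4 f S n) * (k : ℝ) * (n : ℝ)
             + (E2 f S n - 4 * E3 f S n + 3 * E4 f S n) * ((n : ℝ) + (k : ℝ) - 1)) := by
  have hCK : ((n.choose k : ℕ) : ℝ) ≠ 0 := Nat.cast_ne_zero.mpr (Nat.choose_pos hkn).ne'
  have hkR : (2:ℝ) ≤ (k:ℝ) := by exact_mod_cast hk2
  have hnR : (4:ℝ) ≤ (n:ℝ) := by exact_mod_cast hn4
  have hn0 : (n:ℝ) ≠ 0 := by linarith
  have hn1 : (n:ℝ) - 1 ≠ 0 := by linarith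
  have hn2 : (n:ℝ) - 2 ≠ 0 := by linarith
  have hn3 : (n:ℝ) - 3 ≠ 0 := by linarith
  have hk0 : (k:ℝ) ≠ 0 := by linarith
  have hk1 : (k:ℝ) - 1 ≠ 0 := by linarith
  have hTest : ∀ T : Finset V, mcEst f n k T
      = (n:ℝ)*((n:ℝ)-1)/((k:ℝ)*((k:ℝ)-1))/2 * S2s T f := fun T => by
    rw [mcEst, pairSum, offDiag_sum]; ring
  have hsq : ∀ T : Finset V, (mcEst f n k T)^2
      = ((n:ℝ)*((n:ℝ)-1)/((k:ℝ)*((k:ℝ)-1)))^2/4 *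
        (2 * S2s T (fun u v => f u v * f u v) + 4 * S3s T (fun u v w => f u v * f v w)
          + S4s T (fun u v w z => f u v * f w z)) := fun T => by
    rw [hTest T, mul_pow, sq_expand T f hsym]; ring
  have h1 : ∑ T ∈ S.powersetCard k, mcEst f n k T
      = (n:ℝ)*((n:ℝ)-1)/((k:ℝ)*((k:ℝ)-1))/2
        * ((((n - 2).choose (k - 2) : ℕ) : ℝ) * S2s S f) := by
    rw [Finset.sum_congr rfl fun T _ => hTest T, ← Finset.mul_sum, swap2 S k hk2 f, hn]
  have h2 : ∑ T ∈ S.powersetCard k, (mcEst f n k T)^2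
      = ((n:ℝ)*((n:ℝ)-1)/((k:ℝ)*((k:ℝ)-1)))^2/4
        * (2 * ((((n - 2).choose (k - 2) : ℕ) : ℝ) * S2s S (fun u v => f u v * f u v))
          + 4 * ((((if 3 ≤ k then (n - 3).choose (k - 3) else 0 : ℕ)) : ℝ)
              * S3s S (fun u v w => f u v * f v w))
          + (((if 4 ≤ k then (n - 4).choose (k - 4) else 0 : ℕ)) : ℝ)
              * S4s S (fun u v w z => f u v * f w z)) := by
    rw [Finset.sum_congr rfl fun T _ => hsq T, ← Finset.mul_sum]
    congr 1
    rw [Finset.sum_add_distrib, Finset.sum_add_distrib, ← Finset.mul_sum, ← Finset.mul_sum,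
      swap2 S k hk2, swap3 S k, swap4 S k, hn]
  have hPS := sq_expand S f hsym
  have hpow : S2s S (fun u v => f u v ^ 2) = S2s S (fun u v => f u v * f u v) :=
    S2s_congr S _ _ fun u v _ => pow_two (f u v)
  have r2 := ratio2 n k hn4 hk2 hkn
  have r3 := ratio3 n k hn4 hk2 hkn
  have r4 := ratio4 n k hn4 hk2 hkn
  have hC2 : (((n - 2).choose (k - 2) : ℕ) : ℝ)
      = ((n.choose k : ℕ) : ℝ) * ((k:ℝ)*((k:ℝ)-1)) / ((n:ℝ)*((n:ℝ)-1)) := by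
    rw [eq_div_iff (mul_ne_zero hn0 hn1)]; linarith [r2]
  have hC3 : (((if 3 ≤ k then (n - 3).choose (k - 3) else 0 : ℕ)) : ℝ)
      = ((n.choose k : ℕ) : ℝ) * ((k:ℝ)*((k:ℝ)-1)*((k:ℝ)-2))
        / ((n:ℝ)*((n:ℝ)-1)*((n:ℝ)-2)) := by
    rw [eq_div_iff (mul_ne_zero (mul_ne_zero hn0 hn1) hn2)]; linarith [r3]
  have hC4 : (((if 4 ≤ k then (n - 4).choose (k - 4) else 0 : ℕ)) : ℝ)
      = ((n.choose k : ℕ) : ℝ) * ((k:ℝ)*((k:ℝ)-1)*((k:ℝ)-2)*((k:ℝ)-3))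
        / ((n:ℝ)*((n:ℝ)-1)*((n:ℝ)-2)*((n:ℝ)-3)) := by
    rw [eq_div_iff (mul_ne_zero (mul_ne_zero (mul_ne_zero hn0 hn1) hn2) hn3)]
    linarith [r4]
  have key : ∀ x y : ℝ,
      (x * (y * S2s S f) / ((n.choose k : ℕ) : ℝ))^2
        = (x * y / ((n.choose k : ℕ) : ℝ))^2
          * (2 * S2s S (fun u v => f u v * f u v)
            + 4 * S3s S (fun u v w => f u v * f v w)
            + S4s S (fun u v w z => f u v * f w z)) := fun x y => by
    rw [show (x * (y * S2s S f) / ((n.choose k : ℕ) : ℝ))^2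
        = (x * y / ((n.choose k : ℕ) : ℝ))^2 * (S2s S f)^2 by ring, hPS]
  rw [mcVar, h1, h2, E2, E3, E4, tripleSum_eq, quadSum_eq,
    offDiag_sum S (fun u v => f u v ^ 2), hpow, key, hC2, hC3, hC4]
  field_simp
  ring
end

section
/- Let S_k be a uniform k-subset of an n-element set S and let f be a function on unordered pairs with total f(S). The variance of the estimator f̂ = (n(n-1))/(k(k-1))·f(S_k) satisfies Var[f̂] = ((n(n-1))/(k(k-1)) − 1)·∑_{u<v} f(u,v)² + ((n(n-1))/(k(k-1))·(k-2)/(n-2) − 1)·∑_{|{u,v,w}|=3} f(u,v)f(v,w) + ((n(n-1))/(k(k-1))·((k-2)(k-3))/((n-2)(n-3)) − 1)·∑_{|{u,v,w,z}|=4} f(u,v)f(w,z), where the second sum is over all ordered triples of distinct vertices and the third over all configurations of two disjoint unordered pairs. -/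
open Finset

section Aux
variable {V : Type*} [DecidableEq V]


lemma offDiag_nested (T : Finset V) (g : V → V → ℝ) :
    ∑ p ∈ T.offDiag, g p.1 p.2 = ∑ u ∈ T, ∑ v ∈ T \ {u}, g u v := by
  rw [show T.offDiag = (T ×ˢ T).filter (fun a => a.1 ≠ a.2) by ext; simp [and_assoc], Finset.sum_filter, Finset.sum_product]
  refine sum_congr rfl fun u hu => ?_
  rw [Finset.sum_ite, Finset.sum_const_zero, add_zero]
  apply sum_congr _ fun _ _ => rfl
  ext v; simp [ne_comm, and_comm]

lemma pair_swap (T : Finset V) (H : V → V → ℝ) :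
    ∑ u ∈ T, ∑ v ∈ T \ {u}, H u v = ∑ u ∈ T, ∑ v ∈ T \ {u}, H v u := by
  rw [← offDiag_nested, ← offDiag_nested]
  apply Finset.sum_nbij' (fun p => Prod.swap p) (fun p => Prod.swap p) <;>
    simp +contextual [Finset.mem_offDiag, ne_comm, and_comm]

lemma peel (s : Finset V) (a : V) (ha : a ∈ s) (g : V → ℝ) :
    ∑ x ∈ s, g x = g a + ∑ x ∈ s \ {a}, g x := by
  rw [← Finset.erase_eq, ← Finset.add_sum_erase _ g ha]

lemma sq_expand_s9 (T : Finset V) (f : V → V → ℝ) (hsym : ∀ u v, f u v = f v u) :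
    (∑ p ∈ T.offDiag, f p.1 p.2) ^ 2
      = 2 * (∑ p ∈ T.offDiag, (f p.1 p.2) ^ 2) + 4 * tripleSum f T + quadSum f T := by
  rw [offDiag_nested T f, offDiag_nested T (fun u v => (f u v) ^ 2)]
  set P := ∑ u ∈ T, ∑ v ∈ T \ {u}, f u v with hP
  have expand : ∀ u ∈ T, ∀ v ∈ T \ {u},
      f u v * P
        = f u v * f u v + f u v * f v u
          + (∑ w ∈ (T \ {u}) \ {v}, f u v * f u w)
          + (∑ w ∈ (T \ {v}) \ {u}, f u v * f v w)
          + (∑ w ∈ (T \ {u}) \ {v}, (f u v * f w u + f u v * f w v))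
          + ∑ w ∈ (T \ {u}) \ {v}, ∑ z ∈ ((T \ {w}) \ {u}) \ {v}, f u v * f w z := by
    intro u hu v hv
    obtain ⟨hvT, hvu⟩ := Finset.mem_sdiff.1 hv
    rw [Finset.mem_singleton] at hvu
    have huv : u ∈ T \ {v} := by simp [hu, Ne.symm hvu]
    have h1 : P = (f u v + ∑ w ∈ (T \ {u}) \ {v}, f u w)
        + ((f v u + ∑ w ∈ (T \ {v}) \ {u}, f v w)
          + ∑ w ∈ (T \ {u}) \ {v},
              (f w u + (f w v + ∑ z ∈ ((T \ {w}) \ {u}) \ {v}, f w z))) := by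
      rw [hP, peel T u hu (fun a => ∑ v' ∈ T \ {a}, f a v')]
      congr 1
      · exact peel (T \ {u}) v hv (f u)
      rw [peel (T \ {u}) v hv (fun a => ∑ v' ∈ T \ {a}, f a v')]
      congr 1
      · exact peel (T \ {v}) u huv (f v)
      refine sum_congr rfl fun w hw => ?_
      obtain ⟨hw', hwv⟩ := Finset.mem_sdiff.1 hw
      obtain ⟨hwT, hwu⟩ := Finset.mem_sdiff.1 hw'
      rw [Finset.mem_singleton] at hwv hwu
      have hu' : u ∈ T \ {w} := by simp [hu, Ne.symm hwu]
      have hv' : v ∈ (T \ {w}) \ {u} := by simp [hvT, hvu, Ne.symm hwv]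
      rw [peel (T \ {w}) u hu' (f w), peel ((T \ {w}) \ {u}) v hv' (f w)]
    rw [h1]
    simp only [mul_add, Finset.mul_sum, Finset.sum_add_distrib]
    ring
  rw [sq, show P * P = ∑ u ∈ T, ∑ v ∈ T \ {u}, f u v * P by
    rw [Finset.sum_mul]; exact sum_congr rfl fun u _ => Finset.sum_mul _ _ _]
  rw [sum_congr rfl fun u hu => sum_congr rfl fun v hv => expand u hu v hv]
  simp only [Finset.sum_add_distrib]
  have e1 : ∑ u ∈ T, ∑ v ∈ T \ {u}, f u v * f u v
      = ∑ u ∈ T, ∑ v ∈ T \ {u}, (f u v) ^ 2 := by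
    refine sum_congr rfl fun u _ => sum_congr rfl fun v _ => (sq _).symm
  have e2 : ∑ u ∈ T, ∑ v ∈ T \ {u}, f u v * f v u
      = ∑ u ∈ T, ∑ v ∈ T \ {u}, (f u v) ^ 2 := by
    refine sum_congr rfl fun u _ => sum_congr rfl fun v _ => ?_
    rw [hsym v u, sq]
  have keyAC : ∑ u ∈ T, ∑ v ∈ T \ {u}, ∑ w ∈ (T \ {u}) \ {v}, f v u * f u w
      = tripleSum f T := by
    rw [pair_swap T (fun a b => ∑ w ∈ (T \ {a}) \ {b}, f b a * f a w)]
    refine sum_congr rfl fun u _ => sum_congr rfl fun v _ => ?_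
    rw [sdiff_sdiff_comm]
  have e3 : ∑ u ∈ T, ∑ v ∈ T \ {u}, ∑ w ∈ (T \ {u}) \ {v}, f u v * f u w
      = tripleSum f T := by
    rw [← keyAC]
    refine sum_congr rfl fun u _ => sum_congr rfl fun v _ =>
      sum_congr rfl fun w _ => by rw [hsym u v]
  have e4 : ∑ u ∈ T, ∑ v ∈ T \ {u}, ∑ w ∈ (T \ {v}) \ {u}, f u v * f v w
      = tripleSum f T := by
    refine sum_congr rfl fun u _ => sum_congr rfl fun v _ => ?_
    rw [sdiff_sdiff_comm]
  have e5 : ∑ u ∈ T, ∑ v ∈ T \ {u}, ∑ w ∈ (T \ {u}) \ {v}, f u v * f w u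
      = tripleSum f T := by
    rw [← keyAC]
    refine sum_congr rfl fun u _ => sum_congr rfl fun v _ =>
      sum_congr rfl fun w _ => by rw [hsym u v, hsym w u]
  have e6 : ∑ u ∈ T, ∑ v ∈ T \ {u}, ∑ w ∈ (T \ {u}) \ {v}, f u v * f w v
      = tripleSum f T := by
    refine sum_congr rfl fun u _ => sum_congr rfl fun v _ =>
      sum_congr rfl fun w _ => by rw [hsym w v]
  have e7 : ∑ u ∈ T, ∑ v ∈ T \ {u}, ∑ w ∈ (T \ {u}) \ {v},
        ∑ z ∈ ((T \ {w}) \ {u}) \ {v}, f u v * f w z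
      = quadSum f T := by
    refine sum_congr rfl fun u _ => sum_congr rfl fun v _ =>
      sum_congr rfl fun w _ => ?_
    rw [show ((T \ {w}) \ {u}) \ {v} = ((T \ {u}) \ {v}) \ {w} by
      ext x; simp only [Finset.mem_sdiff, Finset.mem_singleton]; tauto]
  rw [e1, e2, e4, e6, e7, e3, e5]
  ring



lemma count_supset (s A : Finset V) (k : ℕ) (hA : A ⊆ s) (hm : A.card ≤ k) :
    ((s.powersetCard k).filter (fun T => A ⊆ T)).card
      = (s.card - A.card).choose (k - A.card) := by
  rw [show s.card - A.card = (s \ A).card from (card_sdiff_of_subset hA).symm,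
    ← card_powersetCard (k - A.card) (s \ A)]
  apply Finset.card_bij' (fun T _ => T \ A) (fun U _ => U ∪ A)
  · intro T hT
    simp only [mem_filter, mem_powersetCard] at hT
    rw [mem_powersetCard]
    exact ⟨sdiff_subset_sdiff hT.1.1 (Finset.Subset.refl A),
      by rw [card_sdiff_of_subset hT.2, hT.1.2]⟩
  · intro U hU
    rw [mem_powersetCard] at hU
    have hdisj : Disjoint U A := disjoint_of_subset_left hU.1 (sdiff_disjoint)
    simp only [mem_filter, mem_powersetCard]
    refine ⟨⟨union_subset (hU.1.trans sdiff_subset) hA, ?_⟩, subset_union_right⟩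
    rw [card_union_of_disjoint hdisj, hU.2]
    omega
  · intro T hT
    simp only [mem_filter, mem_powersetCard] at hT
    rw [sdiff_union_of_subset hT.2]
  · intro U hU
    rw [mem_powersetCard] at hU
    have hdisj : Disjoint U A := disjoint_of_subset_left hU.1 (sdiff_disjoint)
    rw [union_sdiff_right, sdiff_eq_self_of_disjoint hdisj]

lemma count_cond (s : Finset V) (k : ℕ) (A : Finset V) (hA : A ⊆ s) (hm : A.card ≤ k)
    (c : Finset V → Prop) [DecidablePred c] (hc : ∀ T, c T ↔ A ⊆ T) (x : ℝ) :
    ∑ T ∈ s.powersetCard k, (if c T then x else 0)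
      = ((s.card - A.card).choose (k - A.card) : ℝ) * x := by
  rw [← Finset.sum_filter, Finset.sum_const, nsmul_eq_mul]
  congr 1
  rw [Finset.filter_congr (fun T _ => by rw [hc T]), count_supset s A k hA hm]

lemma sum_pair_subsets (s : Finset V) (k : ℕ) (hk : 2 ≤ k) (g : V → V → ℝ) :
    ∑ T ∈ s.powersetCard k, ∑ p ∈ T.offDiag, g p.1 p.2
      = ((s.card - 2).choose (k - 2) : ℝ) * ∑ p ∈ s.offDiag, g p.1 p.2 := by
  have step : ∀ T ∈ s.powersetCard k, ∑ p ∈ T.offDiag, g p.1 p.2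
      = ∑ p ∈ s.offDiag, if p.1 ∈ T ∧ p.2 ∈ T then g p.1 p.2 else 0 := by
    intro T hT
    have hTs : T ⊆ s := (mem_powersetCard.1 hT).1
    rw [← Finset.sum_filter]
    apply Finset.sum_congr _ fun _ _ => rfl
    ext p
    simp only [mem_filter, Finset.mem_offDiag]
    constructor
    · rintro ⟨h1, h2, h3⟩; exact ⟨⟨hTs h1, hTs h2, h3⟩, h1, h2⟩
    · rintro ⟨⟨_, _, h3⟩, h1, h2⟩; exact ⟨h1, h2, h3⟩
  rw [Finset.sum_congr rfl step, Finset.sum_comm, Finset.mul_sum]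
  refine sum_congr rfl fun p hp => ?_
  obtain ⟨h1, h2, h3⟩ := Finset.mem_offDiag.1 hp
  have hA : ({p.1, p.2} : Finset V) ⊆ s := by
    intro x hx; rcases Finset.mem_insert.1 hx with rfl | hx
    · exact h1
    · rw [Finset.mem_singleton.1 hx]; exact h2
  have hcard : ({p.1, p.2} : Finset V).card = 2 := by
    rw [Finset.card_insert_of_notMem (by simpa using h3), Finset.card_singleton]
  rw [count_cond s k {p.1, p.2} hA (by omega)
    (fun T => p.1 ∈ T ∧ p.2 ∈ T) (fun T => by simp [Finset.insert_subset_iff]), hcard]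

lemma inter_sd1 (s T : Finset V) (hTs : T ⊆ s) (u : V) : (s \ {u}) ∩ T = T \ {u} := by
  ext x; simp only [mem_inter, mem_sdiff, mem_singleton]
  exact ⟨fun h => ⟨h.2, h.1.2⟩, fun h => ⟨⟨hTs h.1, h.2⟩, h.1⟩⟩

lemma inter_sd2 (s T : Finset V) (hTs : T ⊆ s) (u v : V) :
    ((s \ {u}) \ {v}) ∩ T = (T \ {u}) \ {v} := by
  ext x; simp only [mem_inter, mem_sdiff, mem_singleton]
  exact ⟨fun h => ⟨⟨h.2, h.1.1.2⟩, h.1.2⟩, fun h => ⟨⟨⟨hTs h.1.1, h.1.2⟩, h.2⟩, h.1.1⟩⟩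

lemma inter_sd3 (s T : Finset V) (hTs : T ⊆ s) (u v w : V) :
    (((s \ {u}) \ {v}) \ {w}) ∩ T = ((T \ {u}) \ {v}) \ {w} := by
  ext x; simp only [mem_inter, mem_sdiff, mem_singleton]
  exact ⟨fun h => ⟨⟨⟨h.2, h.1.1.1.2⟩, h.1.1.2⟩, h.1.2⟩,
    fun h => ⟨⟨⟨⟨hTs h.1.1.1, h.1.1.2⟩, h.1.2⟩, h.2⟩, h.1.1.1⟩⟩

lemma triple_indicator (s T : Finset V) (hTs : T ⊆ s) (g : V → V → V → ℝ) :
    (∑ u ∈ T, ∑ v ∈ T \ {u}, ∑ w ∈ (T \ {u}) \ {v}, g u v w)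
      = ∑ u ∈ s, ∑ v ∈ s \ {u}, ∑ w ∈ (s \ {u}) \ {v},
          if u ∈ T ∧ v ∈ T ∧ w ∈ T then g u v w else 0 := by
  symm
  calc ∑ u ∈ s, ∑ v ∈ s \ {u}, ∑ w ∈ (s \ {u}) \ {v},
          (if u ∈ T ∧ v ∈ T ∧ w ∈ T then g u v w else 0)
      = ∑ u ∈ s, if u ∈ T then (∑ v ∈ s \ {u}, if v ∈ T then
          (∑ w ∈ (s \ {u}) \ {v}, if w ∈ T then g u v w else 0) else 0) else 0 := by
        refine sum_congr rfl fun u _ => ?_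
        by_cases hu : u ∈ T
        · simp only [hu, true_and, if_true]
          refine sum_congr rfl fun v _ => ?_
          by_cases hv : v ∈ T <;> simp [hv]
        · simp [hu]
    _ = ∑ u ∈ T, ∑ v ∈ T \ {u}, ∑ w ∈ (T \ {u}) \ {v}, g u v w := by
        rw [Finset.sum_ite_mem, inter_eq_right.2 hTs]
        refine sum_congr rfl fun u _ => ?_
        rw [Finset.sum_ite_mem, inter_sd1 s T hTs]
        refine sum_congr rfl fun v _ => ?_
        rw [Finset.sum_ite_mem, inter_sd2 s T hTs]

lemma quad_indicator (s T : Finset V) (hTs : T ⊆ s) (g : V → V → V → V → ℝ) :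
    (∑ u ∈ T, ∑ v ∈ T \ {u}, ∑ w ∈ (T \ {u}) \ {v}, ∑ z ∈ ((T \ {u}) \ {v}) \ {w}, g u v w z)
      = ∑ u ∈ s, ∑ v ∈ s \ {u}, ∑ w ∈ (s \ {u}) \ {v}, ∑ z ∈ ((s \ {u}) \ {v}) \ {w},
          if u ∈ T ∧ v ∈ T ∧ w ∈ T ∧ z ∈ T then g u v w z else 0 := by
  symm
  calc ∑ u ∈ s, ∑ v ∈ s \ {u}, ∑ w ∈ (s \ {u}) \ {v}, ∑ z ∈ ((s \ {u}) \ {v}) \ {w},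
          (if u ∈ T ∧ v ∈ T ∧ w ∈ T ∧ z ∈ T then g u v w z else 0)
      = ∑ u ∈ s, if u ∈ T then (∑ v ∈ s \ {u}, if v ∈ T then
          (∑ w ∈ (s \ {u}) \ {v}, if w ∈ T then
            (∑ z ∈ ((s \ {u}) \ {v}) \ {w}, if z ∈ T then g u v w z else 0) else 0)
          else 0) else 0 := by
        refine sum_congr rfl fun u _ => ?_
        by_cases hu : u ∈ T
        · simp only [hu, true_and, if_true]
          refine sum_congr rfl fun v _ => ?_
          by_cases hv : v ∈ T
          · simp only [hv, true_and, if_true]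
            refine sum_congr rfl fun w _ => ?_
            by_cases hw : w ∈ T <;> simp [hw]
          · simp [hv]
        · simp [hu]
    _ = _ := by
        rw [Finset.sum_ite_mem, inter_eq_right.2 hTs]
        refine sum_congr rfl fun u _ => ?_
        rw [Finset.sum_ite_mem, inter_sd1 s T hTs]
        refine sum_congr rfl fun v _ => ?_
        rw [Finset.sum_ite_mem, inter_sd2 s T hTs]
        refine sum_congr rfl fun w _ => ?_
        rw [Finset.sum_ite_mem, inter_sd3 s T hTs]

lemma sum_triple_subsets (s : Finset V) (k : ℕ) (hk : 3 ≤ k) (g : V → V → V → ℝ) :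
    ∑ T ∈ s.powersetCard k, ∑ u ∈ T, ∑ v ∈ T \ {u}, ∑ w ∈ (T \ {u}) \ {v}, g u v w
      = ((s.card - 3).choose (k - 3) : ℝ)
          * ∑ u ∈ s, ∑ v ∈ s \ {u}, ∑ w ∈ (s \ {u}) \ {v}, g u v w := by
  rw [Finset.sum_congr rfl fun T hT =>
    triple_indicator s T (mem_powersetCard.1 hT).1 g]
  rw [Finset.sum_comm, Finset.mul_sum]
  refine sum_congr rfl fun u hu => ?_
  rw [Finset.sum_comm, Finset.mul_sum]
  refine sum_congr rfl fun v hv => ?_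
  rw [Finset.sum_comm, Finset.mul_sum]
  refine sum_congr rfl fun w hw => ?_
  obtain ⟨hv', hvu⟩ := Finset.mem_sdiff.1 hv
  obtain ⟨hw1, hwv⟩ := Finset.mem_sdiff.1 hw
  obtain ⟨hw', hwu⟩ := Finset.mem_sdiff.1 hw1
  rw [Finset.mem_singleton] at hvu hwv hwu
  have hA : ({u, v, w} : Finset V) ⊆ s := by
    intro x hx
    rcases Finset.mem_insert.1 hx with rfl | hx
    · exact hu
    rcases Finset.mem_insert.1 hx with rfl | hx
    · exact hv'
    · rw [Finset.mem_singleton.1 hx]; exact hw'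
  have hcard : ({u, v, w} : Finset V).card = 3 := by
    rw [Finset.card_insert_of_notMem (by simp [Ne.symm hvu, Ne.symm hwu]),
      Finset.card_insert_of_notMem (by simpa using Ne.symm hwv), Finset.card_singleton]
  rw [count_cond s k {u, v, w} hA (by omega)
    (fun T => u ∈ T ∧ v ∈ T ∧ w ∈ T) (fun T => by simp [Finset.insert_subset_iff]), hcard]

lemma sum_quad_subsets (s : Finset V) (k : ℕ) (hk : 4 ≤ k) (g : V → V → V → V → ℝ) :
    ∑ T ∈ s.powersetCard k, ∑ u ∈ T, ∑ v ∈ T \ {u}, ∑ w ∈ (T \ {u}) \ {v},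
        ∑ z ∈ ((T \ {u}) \ {v}) \ {w}, g u v w z
      = ((s.card - 4).choose (k - 4) : ℝ)
          * ∑ u ∈ s, ∑ v ∈ s \ {u}, ∑ w ∈ (s \ {u}) \ {v},
              ∑ z ∈ ((s \ {u}) \ {v}) \ {w}, g u v w z := by
  rw [Finset.sum_congr rfl fun T hT =>
    quad_indicator s T (mem_powersetCard.1 hT).1 g]
  rw [Finset.sum_comm, Finset.mul_sum]
  refine sum_congr rfl fun u hu => ?_
  rw [Finset.sum_comm, Finset.mul_sum]
  refine sum_congr rfl fun v hv => ?_
  rw [Finset.sum_comm, Finset.mul_sum]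
  refine sum_congr rfl fun w hw => ?_
  rw [Finset.sum_comm, Finset.mul_sum]
  refine sum_congr rfl fun z hz => ?_
  obtain ⟨hv', hvu⟩ := Finset.mem_sdiff.1 hv
  obtain ⟨hw1, hwv⟩ := Finset.mem_sdiff.1 hw
  obtain ⟨hw', hwu⟩ := Finset.mem_sdiff.1 hw1
  obtain ⟨hz1, hzw⟩ := Finset.mem_sdiff.1 hz
  obtain ⟨hz2, hzv⟩ := Finset.mem_sdiff.1 hz1
  obtain ⟨hz', hzu⟩ := Finset.mem_sdiff.1 hz2
  rw [Finset.mem_singleton] at hvu hwv hwu hzw hzv hzu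
  have hA : ({u, v, w, z} : Finset V) ⊆ s := by
    intro x hx
    rcases Finset.mem_insert.1 hx with rfl | hx
    · exact hu
    rcases Finset.mem_insert.1 hx with rfl | hx
    · exact hv'
    rcases Finset.mem_insert.1 hx with rfl | hx
    · exact hw'
    · rw [Finset.mem_singleton.1 hx]; exact hz'
  have hcard : ({u, v, w, z} : Finset V).card = 4 := by
    rw [Finset.card_insert_of_notMem (by simp [Ne.symm hvu, Ne.symm hwu, Ne.symm hzu]),
      Finset.card_insert_of_notMem (by simp [Ne.symm hwv, Ne.symm hzv]),
      Finset.card_insert_of_notMem (by simpa using Ne.symm hzw), Finset.card_singleton]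
  rw [count_cond s k {u, v, w, z} hA (by omega)
    (fun T => u ∈ T ∧ v ∈ T ∧ w ∈ T ∧ z ∈ T)
    (fun T => by simp [Finset.insert_subset_iff]), hcard]

end Aux

lemma choose_step (n k : ℕ) (hn : 1 ≤ n) (hk : 1 ≤ k) :
    n.choose k * k = n * ((n - 1).choose (k - 1)) := by
  obtain ⟨m, rfl⟩ : ∃ m, n = m + 1 := ⟨n - 1, by omega⟩
  obtain ⟨j, rfl⟩ : ∃ j, k = j + 1 := ⟨k - 1, by omega⟩
  simp only [Nat.add_sub_cancel]
  exact (Nat.add_one_mul_choose_eq m j).symm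

lemma R2n (a b : ℕ) :
    (a + 2).choose (b + 2) * ((b + 2) * (b + 1)) = (a + 2) * (a + 1) * a.choose b := by
  have h1 := choose_step (a + 2) (b + 2) (by omega) (by omega)
  have h2 := choose_step (a + 1) (b + 1) (by omega) (by omega)
  rw [show a + 2 - 1 = a + 1 from rfl, show b + 2 - 1 = b + 1 from rfl] at h1
  rw [show a + 1 - 1 = a from rfl, show b + 1 - 1 = b from rfl] at h2
  calc (a + 2).choose (b + 2) * ((b + 2) * (b + 1))
      = ((a + 2).choose (b + 2) * (b + 2)) * (b + 1) := by ring
    _ = (a + 2) * ((a + 1).choose (b + 1) * (b + 1)) := by rw [h1]; ring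
    _ = (a + 2) * ((a + 1) * a.choose b) := by rw [h2]
    _ = _ := by ring

lemma R3n (a b : ℕ) :
    (a + 3).choose (b + 3) * ((b + 3) * ((b + 2) * (b + 1)))
      = (a + 3) * ((a + 2) * (a + 1)) * a.choose b := by
  have h1 := choose_step (a + 3) (b + 3) (by omega) (by omega)
  rw [show a + 3 - 1 = a + 2 from rfl, show b + 3 - 1 = b + 2 from rfl] at h1
  calc (a + 3).choose (b + 3) * ((b + 3) * ((b + 2) * (b + 1)))
      = ((a + 3).choose (b + 3) * (b + 3)) * ((b + 2) * (b + 1)) := by ring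
    _ = (a + 3) * ((a + 2).choose (b + 2) * ((b + 2) * (b + 1))) := by rw [h1]; ring
    _ = (a + 3) * ((a + 2) * (a + 1) * a.choose b) := by rw [R2n]
    _ = _ := by ring

lemma R4n (a b : ℕ) :
    (a + 4).choose (b + 4) * ((b + 4) * ((b + 3) * ((b + 2) * (b + 1))))
      = (a + 4) * ((a + 3) * ((a + 2) * (a + 1))) * a.choose b := by
  have h1 := choose_step (a + 4) (b + 4) (by omega) (by omega)
  rw [show a + 4 - 1 = a + 3 from rfl, show b + 4 - 1 = b + 3 from rfl] at h1
  calc (a + 4).choose (b + 4) * ((b + 4) * ((b + 3) * ((b + 2) * (b + 1))))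
      = ((a + 4).choose (b + 4) * (b + 4)) * ((b + 3) * ((b + 2) * (b + 1))) := by ring
    _ = (a + 4) * ((a + 3).choose (b + 3) * ((b + 3) * ((b + 2) * (b + 1)))) := by
        rw [h1]; ring
    _ = (a + 4) * ((a + 3) * ((a + 2) * (a + 1)) * a.choose b) := by rw [R3n]
    _ = _ := by ring

lemma cast_ratio2 (n k : ℕ) (h2 : 2 ≤ k) (hkn : k ≤ n) :
    ((n - 2).choose (k - 2) : ℝ) * ((n : ℝ) * ((n : ℝ) - 1))
      = (n.choose k : ℝ) * ((k : ℝ) * ((k : ℝ) - 1)) := by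
  obtain ⟨a, rfl⟩ : ∃ a, n = a + 2 := ⟨n - 2, by omega⟩
  obtain ⟨b, rfl⟩ : ∃ b, k = b + 2 := ⟨k - 2, by omega⟩
  simp only [Nat.add_sub_cancel]
  have h := congrArg (Nat.cast : ℕ → ℝ) (R2n a b)
  push_cast at h ⊢
  linear_combination -h

lemma cast_ratio3 (n k : ℕ) (h3 : 3 ≤ k) (hkn : k ≤ n) :
    ((n - 3).choose (k - 3) : ℝ) * ((n : ℝ) * ((n : ℝ) - 1) * ((n : ℝ) - 2))
      = (n.choose k : ℝ) * ((k : ℝ) * ((k : ℝ) - 1) * ((k : ℝ) - 2)) := by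
  obtain ⟨a, rfl⟩ : ∃ a, n = a + 3 := ⟨n - 3, by omega⟩
  obtain ⟨b, rfl⟩ : ∃ b, k = b + 3 := ⟨k - 3, by omega⟩
  simp only [Nat.add_sub_cancel]
  have h := congrArg (Nat.cast : ℕ → ℝ) (R3n a b)
  push_cast at h ⊢
  linear_combination -h

lemma cast_ratio4 (n k : ℕ) (h4 : 4 ≤ k) (hkn : k ≤ n) :
    ((n - 4).choose (k - 4) : ℝ)
        * ((n : ℝ) * ((n : ℝ) - 1) * ((n : ℝ) - 2) * ((n : ℝ) - 3))
      = (n.choose k : ℝ) * ((k : ℝ) * ((k : ℝ) - 1) * ((k : ℝ) - 2) * ((k : ℝ) - 3)) := by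
  obtain ⟨a, rfl⟩ : ∃ a, n = a + 4 := ⟨n - 4, by omega⟩
  obtain ⟨b, rfl⟩ : ∃ b, k = b + 4 := ⟨k - 4, by omega⟩
  simp only [Nat.add_sub_cancel]
  have h := congrArg (Nat.cast : ℕ → ℝ) (R4n a b)
  push_cast at h ⊢
  linear_combination -h

/-- Variance of the uniform subset estimator, expressed via the three overlap-type sums:
identical pairs, pairs sharing one vertex (ordered triples), and disjoint pairs. -/
theorem mc_variance_split_formula {V : Type*} [DecidableEq V] (S : Finset V) (n k : ℕ)
    (hn : S.card = n) (hn4 : 4 ≤ n) (hk4 : 4 ≤ k) (hkn : k ≤ n)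
    (f : V → V → ℝ) (hsym : ∀ u v, f u v = f v u) :
    mcVar f S n k
      = (((n : ℝ) * ((n : ℝ) - 1)) / ((k : ℝ) * ((k : ℝ) - 1)) - 1)
          * ((∑ p ∈ S.offDiag, (f p.1 p.2) ^ 2) / 2)
        + (((n : ℝ) * ((n : ℝ) - 1)) / ((k : ℝ) * ((k : ℝ) - 1))
            * (((k : ℝ) - 2) / ((n : ℝ) - 2)) - 1) * tripleSum f S
        + (((n : ℝ) * ((n : ℝ) - 1)) / ((k : ℝ) * ((k : ℝ) - 1))
            * ((((k : ℝ) - 2) * ((k : ℝ) - 3)) / (((n : ℝ) - 2) * ((n : ℝ) - 3))) - 1)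
          * (quadSum f S / 4) := by
  have hNpos := Nat.choose_pos hkn
  have hN : (n.choose k : ℝ) ≠ 0 := by positivity
  have hnn : (4:ℝ) ≤ (n:ℝ) := by exact_mod_cast hn4
  have hkk : (4:ℝ) ≤ (k:ℝ) := by exact_mod_cast hk4
  have hn0 : (n:ℝ) ≠ 0 := by linarith
  have hn1 : (n:ℝ) - 1 ≠ 0 := by nlinarith
  have hn2 : (n:ℝ) - 2 ≠ 0 := by nlinarith
  have hn3 : (n:ℝ) - 3 ≠ 0 := by nlinarith
  have hk0 : (k:ℝ) ≠ 0 := by linarith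
  have hk1 : (k:ℝ) - 1 ≠ 0 := by nlinarith
  set Q2 : ℝ := ∑ p ∈ S.offDiag, (f p.1 p.2) ^ 2 with hQ2
  set T3 : ℝ := tripleSum f S with hT3
  set Q4 : ℝ := quadSum f S with hQ4
  have hps : ∑ T ∈ S.powersetCard k, pairSum f T
      = ((n - 2).choose (k - 2) : ℝ) * pairSum f S := by
    simp only [pairSum]
    rw [← Finset.sum_div, sum_pair_subsets S k (by omega) f, hn, mul_div_assoc]
  have A2 : ∑ T ∈ S.powersetCard k, ∑ p ∈ T.offDiag, (f p.1 p.2) ^ 2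
      = (((n:ℕ) - 2).choose (k - 2) : ℝ) * Q2 := by
    have := sum_pair_subsets S k (by omega : 2 ≤ k) (fun u v => (f u v) ^ 2)
    rw [hn] at this
    exact this
  have A3 : ∑ T ∈ S.powersetCard k, tripleSum f T
      = ((n - 3).choose (k - 3) : ℝ) * T3 := by
    simp only [tripleSum, hT3]
    have := sum_triple_subsets S k (by omega : 3 ≤ k) (fun u v w => f u v * f v w)
    rw [hn] at this
    exact this
  have A4 : ∑ T ∈ S.powersetCard k, quadSum f T
      = ((n - 4).choose (k - 4) : ℝ) * Q4 := by
    simp only [quadSum, hQ4]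
    have := sum_quad_subsets S k hk4 (fun u v w z => f u v * f w z)
    rw [hn] at this
    exact this
  have hsq : ∑ T ∈ S.powersetCard k, (pairSum f T) ^ 2
      = (2 * (((n:ℕ) - 2).choose (k - 2) : ℝ) * Q2
          + 4 * ((n - 3).choose (k - 3) : ℝ) * T3
          + ((n - 4).choose (k - 4) : ℝ) * Q4) / 4 := by
    have step : ∀ T ∈ S.powersetCard k, (pairSum f T) ^ 2
        = (2 * (∑ p ∈ T.offDiag, (f p.1 p.2) ^ 2)
            + 4 * tripleSum f T + quadSum f T) / 4 := by
      intro T _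
      rw [pairSum, div_pow, sq_expand_s9 T f hsym]
      norm_num
    rw [Finset.sum_congr rfl step, ← Finset.sum_div]
    congr 1
    rw [Finset.sum_add_distrib, Finset.sum_add_distrib, ← Finset.mul_sum,
      ← Finset.mul_sum, A2, A3, A4]
    ring
  have hexpS : (pairSum f S) ^ 2 = (2 * Q2 + 4 * T3 + Q4) / 4 := by
    rw [pairSum, div_pow, sq_expand_s9 S f hsym, hQ2, hT3, hQ4]
    norm_num
  have hc2 : (((n:ℕ) - 2).choose (k - 2) : ℝ)
      = (n.choose k : ℝ) * ((k:ℝ) * ((k:ℝ) - 1)) / ((n:ℝ) * ((n:ℝ) - 1)) := by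
    rw [eq_div_iff (by exact mul_ne_zero hn0 hn1)]
    linear_combination cast_ratio2 n k (by omega) hkn
  have hc3 : (((n:ℕ) - 3).choose (k - 3) : ℝ)
      = (n.choose k : ℝ) * ((k:ℝ) * ((k:ℝ) - 1) * ((k:ℝ) - 2))
          / ((n:ℝ) * ((n:ℝ) - 1) * ((n:ℝ) - 2)) := by
    rw [eq_div_iff (by exact mul_ne_zero (mul_ne_zero hn0 hn1) hn2)]
    linear_combination cast_ratio3 n k (by omega) hkn
  have hc4 : (((n:ℕ) - 4).choose (k - 4) : ℝ)
      = (n.choose k : ℝ) * ((k:ℝ) * ((k:ℝ) - 1) * ((k:ℝ) - 2) * ((k:ℝ) - 3))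
          / ((n:ℝ) * ((n:ℝ) - 1) * ((n:ℝ) - 2) * ((n:ℝ) - 3)) := by
    rw [eq_div_iff (by exact mul_ne_zero (mul_ne_zero (mul_ne_zero hn0 hn1) hn2) hn3)]
    linear_combination cast_ratio4 n k (by omega) hkn
  rw [mcVar]
  simp only [mcEst, mul_pow]
  rw [← Finset.mul_sum, ← Finset.mul_sum, hps, hsq]
  have hsplit : ∀ a b c d : ℝ, (a * (b * c) / d) ^ 2 = (a * b / d) ^ 2 * c ^ 2 :=
    fun a b c d => by ring
  rw [hsplit]
  rw [hexpS, hc2, hc3, hc4]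
  field_simp
  ring
end
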